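/- If three of the four triples among four pairwise distinct points on the boundary of complex hyperbolic space have vanishing Cartan invariant (so each such triple lies on an ℝ-circle), then all four points lie on a common ℝ-circle. -/

import Mathlib

open Complex Matrix

/-- The Hermitian form `⟨u,w⟩ = u₁·conj(w₃) + u₂·conj(w₂) + u₃·conj(w₁)` on `ℂ³`. -/
noncomputable def herm (z w : Fin 3 → ℂ) : ℂ :=
  z 0 * (starRingEnd ℂ) (w 2) + z 1 * (starRingEnd ℂ) (w 1) + z 2 * (starRingEnd ℂ) (w 0)

/-- Cartan's angular invariant of a triple of lifted boundary points. -/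
noncomputable def cartan (p q r : Fin 3 → ℂ) : ℝ :=
  Complex.arg (-(herm p q * herm q r * herm r p))

/-- The matrix `J` of the Hermitian form. -/
noncomputable def formJ : Matrix (Fin 3) (Fin 3) ℂ := !![0, 0, 1; 0, 1, 0; 1, 0, 0]

/-- A family of boundary points (given by nonzero null lifts in `ℂ³`) lies on a
common `ℝ`-circle if some element of `U(2,1)` moves all of them onto the standard
`ℝ`-circle, whose lifts are, up to a complex scalar, real null vectors. -/
def OnCommonRCircle {ι : Type*} (v : ι → (Fin 3 → ℂ)) : Prop :=
  ∃ g : Matrix (Fin 3) (Fin 3) ℂ, g.conjTranspose * formJ * g = formJ ∧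
    ∀ i, ∃ (c : ℂ) (r : Fin 3 → ℝ), c ≠ 0 ∧ g.mulVec (v i) = c • (fun k => (r k : ℂ))

lemma herm_conj (z w : Fin 3 → ℂ) : herm w z = (starRingEnd ℂ) (herm z w) := by
  simp [herm]; ring

lemma herm_smul (c d : ℂ) (z w : Fin 3 → ℂ) :
    herm (c • z) (d • w) = c * (starRingEnd ℂ) d * herm z w := by
  simp [herm]; ring

lemma herm_smul_left (c : ℂ) (z w : Fin 3 → ℂ) : herm (c • z) w = c * herm z w := by
  simp [herm]; ring

lemma herm_lin (x0 x1 x2 y0 y1 y2 : ℝ) (z0 z1 z2 : Fin 3 → ℂ) :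
    herm (fun k => (x0:ℂ) * z0 k + (x1:ℂ) * z1 k + (x2:ℂ) * z2 k)
         (fun k => (y0:ℂ) * z0 k + (y1:ℂ) * z1 k + (y2:ℂ) * z2 k)
    = (x0*y0 : ℝ) * herm z0 z0 + (x0*y1 : ℝ) * herm z0 z1 + (x0*y2 : ℝ) * herm z0 z2
    + (x1*y0 : ℝ) * herm z1 z0 + (x1*y1 : ℝ) * herm z1 z1 + (x1*y2 : ℝ) * herm z1 z2
    + (x2*y0 : ℝ) * herm z2 z0 + (x2*y1 : ℝ) * herm z2 z1 + (x2*y2 : ℝ) * herm z2 z2 := by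
  simp only [herm, map_add, _root_.map_mul, Complex.conj_ofReal]
  push_cast
  ring

lemma herm_lin_left (z0 z1 z2 w : Fin 3 → ℂ) (y0 y1 y2 : ℂ) :
    herm (fun k => y0 * z0 k + y1 * z1 k + y2 * z2 k) w
    = y0 * herm z0 w + y1 * herm z1 w + y2 * herm z2 w := by
  simp [herm]; ring

lemma herm_lin_right (z z0 z1 z2 : Fin 3 → ℂ) (y0 y1 y2 : ℝ) :
    herm z (fun k => (y0:ℂ) * z0 k + (y1:ℂ) * z1 k + (y2:ℂ) * z2 k)
    = (y0:ℂ) * herm z z0 + (y1:ℂ) * herm z z1 + (y2:ℂ) * herm z z2 := by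
  simp only [herm, map_add, _root_.map_mul, Complex.conj_ofReal]
  ring

lemma cartan_zero {p q r : Fin 3 → ℂ} (h : cartan p q r = 0)
    (hne : herm p q * herm q r * herm r p ≠ 0) :
    ∃ t : ℝ, 0 < t ∧ herm p q * herm q r * herm r p = -(t : ℂ) := by
  have hZ : (-(herm p q * herm q r * herm r p)).arg = 0 := h
  rw [Complex.arg_eq_zero_iff] at hZ
  set Z := -(herm p q * herm q r * herm r p) with hZdef
  have hZne : Z ≠ 0 := neg_ne_zero.mpr hne
  have hre : (Z.re : ℂ) = Z := by
    apply Complex.ext <;> simp [hZ.2]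
  refine ⟨Z.re, ?_, ?_⟩
  · rcases lt_or_eq_of_le hZ.1 with h' | h'
    · exact h'
    · exfalso; apply hZne; apply Complex.ext <;> simp [← h', hZ.2]
  · rw [hre]; simp [hZdef]

/-- If three of the four triples among four pairwise distinct boundary points have
vanishing Cartan invariant, then all four points lie on a common `ℝ`-circle. -/
theorem four_points_on_RCircle (v : Fin 4 → (Fin 3 → ℂ))
    (hnull : ∀ i, herm (v i) (v i) = 0)
    (hne : ∀ i, v i ≠ 0)
    (hdist : ∀ i j, i ≠ j → herm (v i) (v j) ≠ 0)
    (h1 : cartan (v 1) (v 2) (v 3) = 0)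
    (h2 : cartan (v 0) (v 2) (v 3) = 0)
    (h3 : cartan (v 0) (v 1) (v 3) = 0) :
    OnCommonRCircle v := by
  obtain ⟨t1, ht1, hP1⟩ := cartan_zero h1
    (mul_ne_zero (mul_ne_zero (hdist 1 2 (by decide)) (hdist 2 3 (by decide))) (hdist 3 1 (by decide)))
  obtain ⟨t2, ht2, hP2⟩ := cartan_zero h2
    (mul_ne_zero (mul_ne_zero (hdist 0 2 (by decide)) (hdist 2 3 (by decide))) (hdist 3 0 (by decide)))
  obtain ⟨t3, ht3, hP3⟩ := cartan_zero h3
    (mul_ne_zero (mul_ne_zero (hdist 0 1 (by decide)) (hdist 1 3 (by decide))) (hdist 3 0 (by decide)))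
  -- scalars
  set c0 : ℂ := herm (v 3) (v 0) with hc0def
  set c1 : ℂ := herm (v 3) (v 1) with hc1def
  set c2 : ℂ := herm (v 3) (v 2) with hc2def
  have hc0 : c0 ≠ 0 := hdist 3 0 (by decide)
  have hc1 : c1 ≠ 0 := hdist 3 1 (by decide)
  have hc2 : c2 ≠ 0 := hdist 3 2 (by decide)
  -- rescaled lifts
  set w0 : Fin 3 → ℂ := c0 • v 0 with hw0def
  set w1 : Fin 3 → ℂ := c1 • v 1 with hw1def
  set w2 : Fin 3 → ℂ := c2 • v 2 with hw2def
  set w3 : Fin 3 → ℂ := v 3 with hw3def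
  -- conjugation facts
  have hcc1 : (starRingEnd ℂ) c1 = herm (v 1) (v 3) := by
    rw [hc1def, herm_conj (v 1) (v 3)]; simp
  have hcc2 : (starRingEnd ℂ) c2 = herm (v 2) (v 3) := by
    rw [hc2def, herm_conj (v 2) (v 3)]; simp
  have hcc0 : (starRingEnd ℂ) c0 = herm (v 0) (v 3) := by
    rw [hc0def, herm_conj (v 0) (v 3)]; simp
  -- real Gram entries
  set aR : ℝ := -t1 with haRdef
  set bR : ℝ := Complex.normSq (herm (v 1) (v 3)) with hbRdef
  set cR : ℝ := Complex.normSq (herm (v 2) (v 3)) with hcRdef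
  set pR : ℝ := -t3 with hpRdef
  set qR : ℝ := -t2 with hqRdef
  set rR : ℝ := Complex.normSq (herm (v 0) (v 3)) with hrRdef
  have ha : aR < 0 := neg_neg_iff_pos.mpr ht1
  have hb : bR > 0 := Complex.normSq_pos.mpr (hdist 1 3 (by decide))
  have hc : cR > 0 := Complex.normSq_pos.mpr (hdist 2 3 (by decide))
  have hane : aR ≠ 0 := ne_of_lt ha
  -- Gram value lemmas
  have hg12 : herm w1 w2 = (aR : ℂ) := by
    rw [hw1def, hw2def, herm_smul, hcc2, haRdef]
    push_cast
    linear_combination hP1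
  have hg21 : herm w2 w1 = (aR : ℂ) := by
    rw [herm_conj w1 w2, hg12, Complex.conj_ofReal]
  have hg13 : herm w1 w3 = (bR : ℂ) := by
    rw [hw1def, hw3def, herm_smul_left, hc1def, herm_conj (v 1) (v 3), hbRdef]
    rw [Complex.normSq_eq_conj_mul_self]
  have hg31 : herm w3 w1 = (bR : ℂ) := by
    rw [herm_conj w1 w3, hg13, Complex.conj_ofReal]
  have hg23 : herm w2 w3 = (cR : ℂ) := by
    rw [hw2def, hw3def, herm_smul_left, hc2def, herm_conj (v 2) (v 3), hcRdef]
    rw [Complex.normSq_eq_conj_mul_self]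
  have hg32 : herm w3 w2 = (cR : ℂ) := by
    rw [herm_conj w2 w3, hg23, Complex.conj_ofReal]
  have hg11 : herm w1 w1 = 0 := by
    rw [hw1def, herm_smul, hnull 1, mul_zero]
  have hg22 : herm w2 w2 = 0 := by
    rw [hw2def, herm_smul, hnull 2, mul_zero]
  have hg33 : herm w3 w3 = 0 := by
    rw [hw3def]; exact hnull 3
  have hg01 : herm w0 w1 = (pR : ℂ) := by
    rw [hw0def, hw1def, herm_smul, hcc1, hpRdef]
    push_cast
    linear_combination hP3
  have hg02 : herm w0 w2 = (qR : ℂ) := by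
    rw [hw0def, hw2def, herm_smul, hcc2, hqRdef]
    push_cast
    linear_combination hP2
  have hg03 : herm w0 w3 = (rR : ℂ) := by
    rw [hw0def, hw3def, herm_smul_left, hc0def, herm_conj (v 0) (v 3), hrRdef]
    rw [Complex.normSq_eq_conj_mul_self]
  -- the square root scalar
  set mR : ℝ := -(2*aR*bR*cR) with hmRdef
  have hm : 0 < mR := by
    rw [hmRdef]
    nlinarith [mul_pos (mul_pos (neg_pos.mpr ha) hb) hc]
  set sR : ℝ := (Real.sqrt mR)⁻¹ with hsRdef
  have hsqrt : Real.sqrt mR > 0 := Real.sqrt_pos.mpr hm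
  have hs : 0 < sR := inv_pos.mpr hsqrt
  have hsne : sR ≠ 0 := ne_of_gt hs
  have hs2 : sR^2 * mR = 1 := by
    rw [hsRdef, ← Real.sq_sqrt (le_of_lt hm)]
    field_simp
    rw [Real.sq_sqrt (le_of_lt hm), Real.sq_sqrt (le_of_lt hm)]
  -- coefficient vectors
  set R0 : Fin 3 → ℝ := ![1, -(sR*cR), 0] with hR0def
  set R1 : Fin 3 → ℝ := ![0, -(sR*bR), 1/aR] with hR1def
  set R2 : Fin 3 → ℝ := ![0, sR*aR, 0] with hR2def
  set Q : Matrix (Fin 3) (Fin 3) ℂ :=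
    Matrix.of (fun k j => ((R0 j : ℝ):ℂ) * w1 k + ((R1 j : ℝ):ℂ) * w2 k + ((R2 j : ℝ):ℂ) * w3 k)
    with hQdef
  have hQapp : ∀ j, (fun k => Q k j)
      = fun k => ((R0 j : ℝ):ℂ) * w1 k + ((R1 j : ℝ):ℂ) * w2 k + ((R2 j : ℝ):ℂ) * w3 k :=
    fun _ => rfl
  have hs2R : sR^2 * (-(2*aR*bR*cR)) = 1 := by rw [← hmRdef]; exact hs2
  have hs2C : (sR:ℂ)^2 * (-(2*(aR:ℂ)*(bR:ℂ)*(cR:ℂ))) = 1 := by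
    have h := congrArg (fun x : ℝ => (x:ℂ)) hs2R
    simp only [Complex.ofReal_mul, Complex.ofReal_neg, Complex.ofReal_pow,
      Complex.ofReal_ofNat, Complex.ofReal_one] at h
    exact h
  have hcol : ∀ i j : Fin 3, herm (fun k => Q k j) (fun k => Q k i) = formJ i j := by
    intro i j
    rw [hQapp, hQapp, herm_lin]
    rw [hg11, hg12, hg13, hg21, hg22, hg23, hg31, hg32, hg33]
    have haC : (aR:ℂ) ≠ 0 := Complex.ofReal_ne_zero.mpr hane
    have hinvC : ((aR:ℂ))⁻¹ * (aR:ℂ) = 1 := inv_mul_cancel₀ haC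
    fin_cases i <;> fin_cases j
    all_goals try simp [hR0def, hR1def, hR2def, formJ, Matrix.vecHead, Matrix.vecTail]
    all_goals try push_cast
    all_goals first
        | rfl
        | ring1
        | linear_combination hinvC
        | linear_combination hs2C
  -- the unitarity of Q
  have hQJQ : Q.conjTranspose * formJ * Q = formJ := by
    ext i j
    have h := hcol i j
    simp only [herm] at h
    simp [Matrix.mul_apply, Fin.sum_univ_three, Matrix.conjTranspose_apply,
      Complex.star_def, formJ] at h ⊢
    linear_combination h
  have hdetJ : formJ.det = -1 := by
    simp [formJ, Matrix.det_fin_three]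
  have hdetQ : Q.det ≠ 0 := by
    intro h0
    have hd := congrArg Matrix.det hQJQ
    rw [Matrix.det_mul, Matrix.det_mul, Matrix.det_conjTranspose, h0, hdetJ] at hd
    simp at hd
  have hU : IsUnit Q.det := isUnit_iff_ne_zero.mpr hdetQ
  have hQinv : Q⁻¹ * Q = 1 := Matrix.nonsing_inv_mul Q hU
  have hQinv' : Q * Q⁻¹ = 1 := Matrix.mul_nonsing_inv Q hU
  have haC : (aR:ℂ) ≠ 0 := Complex.ofReal_ne_zero.mpr hane
  have hsC : (sR:ℂ) ≠ 0 := Complex.ofReal_ne_zero.mpr hsne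
  refine ⟨Q⁻¹, ?_, ?_⟩
  · have h1' : (Q⁻¹).conjTranspose * Q.conjTranspose = 1 := by
      rw [← Matrix.conjTranspose_mul, hQinv', Matrix.conjTranspose_one]
    calc (Q⁻¹).conjTranspose * formJ * Q⁻¹
        = (Q⁻¹).conjTranspose * (Q.conjTranspose * formJ * Q) * Q⁻¹ := by rw [hQJQ]
      _ = ((Q⁻¹).conjTranspose * Q.conjTranspose) * formJ * (Q * Q⁻¹) := by
          simp only [Matrix.mul_assoc]
      _ = formJ := by rw [h1', hQinv', Matrix.one_mul, Matrix.mul_one]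
  · -- the four points
    have hQmulVec : ∀ x : Fin 3 → ℂ, Q.mulVec x
        = fun k => x 0 * Q k 0 + x 1 * Q k 1 + x 2 * Q k 2 := by
      intro x; funext k
      simp [Matrix.mulVec, dotProduct, Fin.sum_univ_three]
      ring
    have he1 : Q.mulVec ![1,0,0] = w1 := by
      funext k
      simp [Matrix.mulVec, dotProduct, Fin.sum_univ_three, hQdef, hR0def, hR1def, hR2def]
    have he2 : Q.mulVec ![0,0,(aR:ℂ)] = w2 := by
      funext k
      simp [Matrix.mulVec, dotProduct, Fin.sum_univ_three, hQdef, hR0def, hR1def, hR2def]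
      push_cast
      field_simp
    have he3 : Q.mulVec ![((cR/aR : ℝ):ℂ), ((1/(sR*aR) : ℝ):ℂ), ((bR:ℝ):ℂ)] = w3 := by
      funext k
      simp [Matrix.mulVec, dotProduct, Fin.sum_univ_three, hQdef, hR0def, hR1def, hR2def]
      push_cast
      field_simp
      ring
    intro i
    fin_cases i
    · -- point 0
      show ∃ (c : ℂ) (r : Fin 3 → ℝ), c ≠ 0 ∧ Q⁻¹.mulVec (v 0) = c • (fun k => (r k : ℂ))
      set y : Fin 3 → ℂ := Q⁻¹.mulVec w0 with hydef
      have hQy : Q.mulVec y = w0 := by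
        rw [hydef, Matrix.mulVec_mulVec, hQinv', Matrix.one_mulVec]
      have hpair : ∀ j, herm w0 (fun k => Q k j)
          = y 0 * formJ j 0 + y 1 * formJ j 1 + y 2 * formJ j 2 := by
        intro j
        conv_lhs => rw [← hQy, hQmulVec y]
        rw [herm_lin_left (fun k => Q k 0) (fun k => Q k 1) (fun k => Q k 2)
          (fun k => Q k j) (y 0) (y 1) (y 2), hcol j 0, hcol j 1, hcol j 2]
      have hw0col : ∀ j, herm w0 (fun k => Q k j)
          = ((R0 j : ℝ):ℂ) * (pR:ℂ) + ((R1 j : ℝ):ℂ) * (qR:ℂ) + ((R2 j : ℝ):ℂ) * (rR:ℂ) := by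
        intro j
        rw [hQapp j, herm_lin_right, hg01, hg02, hg03]
      have hy0 : y 0 = ((qR/aR : ℝ) : ℂ) := by
        have h := (hpair 2).symm.trans (hw0col 2)
        simp [formJ, Matrix.vecHead, Matrix.vecTail, hR0def, hR1def, hR2def] at h
        push_cast at h ⊢
        first | linear_combination h | linear_combination -h
      have hy1 : y 1 = ((-(sR*cR)*pR + -(sR*bR)*qR + sR*aR*rR : ℝ) : ℂ) := by
        have h := (hpair 1).symm.trans (hw0col 1)
        simp [formJ, Matrix.vecHead, Matrix.vecTail, hR0def, hR1def, hR2def] at h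
        push_cast at h ⊢
        first | linear_combination h | linear_combination -h
      have hy2 : y 2 = ((pR : ℝ) : ℂ) := by
        have h := (hpair 0).symm.trans (hw0col 0)
        simp [formJ, Matrix.vecHead, Matrix.vecTail, hR0def, hR1def, hR2def] at h
        push_cast at h ⊢
        first | linear_combination h | linear_combination -h
      refine ⟨c0⁻¹, ![qR/aR, -(sR*cR)*pR + -(sR*bR)*qR + sR*aR*rR, pR], inv_ne_zero hc0, ?_⟩
      have hv : v 0 = c0⁻¹ • w0 := by
        rw [hw0def, smul_smul, inv_mul_cancel₀ hc0, one_smul]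
      rw [hv, Matrix.mulVec_smul, ← hydef]
      congr 1
      funext k; fin_cases k <;> simp [hy0, hy1, hy2]
    · -- point 1
      show ∃ (c : ℂ) (r : Fin 3 → ℝ), c ≠ 0 ∧ Q⁻¹.mulVec (v 1) = c • (fun k => (r k : ℂ))
      refine ⟨c1⁻¹, ![1,0,0], inv_ne_zero hc1, ?_⟩
      have hv : v 1 = c1⁻¹ • w1 := by
        rw [hw1def, smul_smul, inv_mul_cancel₀ hc1, one_smul]
      rw [hv, Matrix.mulVec_smul, ← he1, Matrix.mulVec_mulVec, hQinv, Matrix.one_mulVec]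
      congr 1
      funext k; fin_cases k <;> simp
    · -- point 2
      show ∃ (c : ℂ) (r : Fin 3 → ℝ), c ≠ 0 ∧ Q⁻¹.mulVec (v 2) = c • (fun k => (r k : ℂ))
      refine ⟨c2⁻¹, ![0,0,aR], inv_ne_zero hc2, ?_⟩
      have hv : v 2 = c2⁻¹ • w2 := by
        rw [hw2def, smul_smul, inv_mul_cancel₀ hc2, one_smul]
      rw [hv, Matrix.mulVec_smul, ← he2, Matrix.mulVec_mulVec, hQinv, Matrix.one_mulVec]
      congr 1
      funext k; fin_cases k <;> simp
    · -- point 3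
      show ∃ (c : ℂ) (r : Fin 3 → ℝ), c ≠ 0 ∧ Q⁻¹.mulVec (v 3) = c • (fun k => (r k : ℂ))
      refine ⟨1, ![cR/aR, 1/(sR*aR), bR], one_ne_zero, ?_⟩
      have hv : v 3 = w3 := hw3def
      rw [hv, ← he3, Matrix.mulVec_mulVec, hQinv, Matrix.one_mulVec, one_smul]
      funext k; fin_cases k <;> simp
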